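/- Let (X,μ,F) be a nonsingular E-branching system, e an edge, f_e : D_{r(e)} → R_e with Radon–Nikodym derivative Φ_{f_e} of μ∘f_e on D_{r(e)}, and F|_{R_e} = f_e⁻¹ a.e. Then for real u, v ∈ L²(X,μ) supported in R_e with uv ∈ L¹(X,μ), the function χ_{D_{r(e)}}·Φ_{f_e}·(u∘f_e)·(v∘f_e) equals P_F(uv), i.e., for every measurable set A, ∫_A χ_{D_{r(e)}}·Φ_{f_e}·(u∘f_e)·(v∘f_e) dμ = ∫_{F⁻¹(A)} uv dμ. -/

import Mathlib

open MeasureTheory Set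
open scoped ENNReal symmDiff

/-- For an edge `e` of a nonsingular E-branching system, with
`f_e : D_{r(e)} → R_e`, Radon–Nikodym derivative `Φ_{f_e}` of `μ∘f_e` on `D_{r(e)}`, and
`F = f_e⁻¹` a.e. on `R_e`, and real `u, v ∈ L²(X,μ)` supported in `R_e` with `uv ∈ L¹(X,μ)`,
the function `χ_{D_{r(e)}}·Φ_{f_e}·(u∘f_e)·(v∘f_e)` equals `P_F(uv)`: for every measurable `A`,
`∫_A χ_{D_{r(e)}}·Φ_{f_e}·(u∘f_e)·(v∘f_e) dμ = ∫_{F⁻¹(A)} u·v dμ`. -/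
theorem stmt13 {X : Type*} [MeasurableSpace X] (μ : Measure X) [SigmaFinite μ]
    (Re De : Set X) (hRmeas : MeasurableSet Re) (hDmeas : MeasurableSet De)
    (f finv : X → X) (hf : Measurable f) (hfinv : Measurable finv)
    (hmaps : Set.MapsTo f De Re) (hmapsinv : Set.MapsTo finv Re De)
    (himage : μ ((f '' De) ∆ Re) = 0)
    (hright : ∀ᵐ x ∂μ.restrict Re, f (finv x) = x)
    (hleft : ∀ᵐ x ∂μ.restrict De, finv (f x) = x)
    (Φ : X → ℝ) (hΦmeas : Measurable Φ) (hΦnonneg : 0 ≤ Φ)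
    (hRN : (μ.restrict Re).map finv = (μ.restrict De).withDensity (fun x => ENNReal.ofReal (Φ x)))
    (F : X → X) (hFmeas : Measurable F)
    (hFns : ∀ A : Set X, MeasurableSet A → μ A = 0 → μ (F ⁻¹' A) = 0)
    (hF : ∀ᵐ x ∂μ.restrict Re, F x = finv x)
    (u v : X → ℝ) (humeas : Measurable u) (hvmeas : Measurable v)
    (huL2 : MemLp u 2 μ) (hvL2 : MemLp v 2 μ)
    (husupp : ∀ᵐ x ∂μ, x ∉ Re → u x = 0) (hvsupp : ∀ᵐ x ∂μ, x ∉ Re → v x = 0)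
    (huv : Integrable (fun x => u x * v x) μ) :
    ∀ A : Set X, MeasurableSet A →
      ∫ x in A, De.indicator (fun y => Φ y * (u (f y) * v (f y))) x ∂μ
        = ∫ x in F ⁻¹' A, u x * v x ∂μ := by
  intro A hA
  have hΦ' : ∀ x, ((Φ x).toNNReal : ℝ) = Φ x := fun x => Real.coe_toNNReal _ (hΦnonneg x)
  set g : X → ℝ := fun y => A.indicator (fun y => u (f y) * v (f y)) y with hgdef
  have hgmeas : Measurable g := ((humeas.comp hf).mul (hvmeas.comp hf)).indicator hA
  have hFRe : ∀ᵐ x ∂μ, x ∈ Re → F x = finv x := (ae_restrict_iff' hRmeas).mp hF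
  have hrightRe : ∀ᵐ x ∂μ, x ∈ Re → f (finv x) = x := (ae_restrict_iff' hRmeas).mp hright
  have key : (fun x => (F ⁻¹' A).indicator (fun x => u x * v x) x)
      =ᵐ[μ] fun x => Re.indicator (fun x => g (finv x)) x := by
    filter_upwards [hFRe, hrightRe, husupp, hvsupp] with x h1 h2 h3 h4
    by_cases hx : x ∈ Re
    · show (F ⁻¹' A).indicator (fun x => u x * v x) x
          = Re.indicator (fun x => A.indicator (fun y => u (f y) * v (f y)) (finv x)) x
      rw [Set.indicator_of_mem hx]
      by_cases hAx : finv x ∈ A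
      · rw [Set.indicator_of_mem hAx,
          Set.indicator_of_mem (show x ∈ F ⁻¹' A from by rw [Set.mem_preimage, h1 hx]; exact hAx),
          h2 hx]
      · rw [Set.indicator_of_notMem hAx,
          Set.indicator_of_notMem (show x ∉ F ⁻¹' A from by rw [Set.mem_preimage, h1 hx]; exact hAx)]
    · simp [Set.indicator_apply, hx, h3 hx]
  calc ∫ x in A, De.indicator (fun y => Φ y * (u (f y) * v (f y))) x ∂μ
      = ∫ x in A ∩ De, Φ x * (u (f x) * v (f x)) ∂μ := setIntegral_indicator hDmeas
    _ = ∫ x in De, A.indicator (fun y => Φ y * (u (f y) * v (f y))) x ∂μ := by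
        rw [setIntegral_indicator hA, Set.inter_comm]
    _ = ∫ x in De, Φ x * g x ∂μ := by
        refine integral_congr_ae (Filter.Eventually.of_forall fun x => ?_)
        by_cases hx : x ∈ A <;> simp [hgdef, Set.indicator_apply, hx]
    _ = ∫ x, g x ∂((μ.restrict De).withDensity fun x => ENNReal.ofReal (Φ x)) := by
        rw [show (fun x => ENNReal.ofReal (Φ x)) = (fun x => ((Φ x).toNNReal : ℝ≥0∞)) from rfl,
          integral_withDensity_eq_integral_smul hΦmeas.real_toNNReal g]
        refine integral_congr_ae (Filter.Eventually.of_forall fun x => ?_)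
        simp [NNReal.smul_def, hΦ' x]
    _ = ∫ x, g x ∂((μ.restrict Re).map finv) := by rw [hRN]
    _ = ∫ x in Re, g (finv x) ∂μ := integral_map hfinv.aemeasurable hgmeas.aestronglyMeasurable
    _ = ∫ x, Re.indicator (fun x => g (finv x)) x ∂μ := (integral_indicator hRmeas).symm
    _ = ∫ x, (F ⁻¹' A).indicator (fun x => u x * v x) x ∂μ := integral_congr_ae key.symm
    _ = ∫ x in F ⁻¹' A, u x * v x ∂μ := integral_indicator (hFmeas hA)
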